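/- Let ψ : ℝⁿ ⇉ ℝⁿ satisfy the (Γ₁)-condition and V : ℝⁿ → ℝⁿ be L-Lipschitz continuous and η-strongly monotone. Let μ > 0 and ρ > 0 satisfy ‖P_{ψ(r)}(y) − P_{ψ(s)}(y)‖ ≤ ρ‖r − s‖ for all y, r, s ∈ ℝⁿ, assume θ := η − ρ − 1/2 − L²/2 − μ²/2 + μη > 0 and √(L² − 2ημ + μ²) + ρ < μ, and set θ₁ := θ/(2L + ρ + μ)². Suppose 0 < σ < 1 and 0 < τ < θ₁ · min{(1 − σ)/4, σ²/(4 − σ)}. Let x* be the unique solution of the inverse quasi-variational inequality problem, and let {x_n} satisfy x_{n+1} = x_n + (1 − σ)(x_n − x_{n−1}) + τ(P_{ψ(x_n)}(V(x_n) − μ x_n) − V(x_n)) for n ≥ 1. With v_n := ‖x_n − x*‖², c_n := ‖x_n − x_{n−1}‖², v^∇(n) := v_n − v_{n−1}, v^{Δ∇}(n) := (v_{n+1} − v_n) − (v_n − v_{n−1}), c^Δ(n) := c_{n+1} − c_n, C₀ := σ(θ₁σ/τ + 1) − 4 and C₁ := θ₁σ/τ + 1, the following inequality holds for all n ≥ 1: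 v^{Δ∇}(n) + σ v^∇(n) + θτ v_n + C₀ c_n + C₁ c^Δ(n) ≤ 0. -/

import Mathlib

open scoped RealInnerProductSpace
open MeasureTheory

/- Metric projection onto a set `C ⊆ ℝⁿ`: when `C` is nonempty, closed and convex this is
the unique nearest point of `C`. -/
open Classical in
noncomputable def metricProj {d : ℕ} (C : Set (EuclideanSpace ℝ (Fin d)))
    (x : EuclideanSpace ℝ (Fin d)) : EuclideanSpace ℝ (Fin d) :=
  if h : ∃ y, y ∈ C ∧ ∀ z ∈ C, ‖x - y‖ ≤ ‖x - z‖ then h.choose else x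

lemma metricProj_spec {d : ℕ} {C : Set (EuclideanSpace ℝ (Fin d))} (hne : C.Nonempty)
    (hcl : IsClosed C) (hcv : Convex ℝ C) (x : EuclideanSpace ℝ (Fin d)) :
    metricProj C x ∈ C ∧ ∀ z ∈ C, ⟪x - metricProj C x, z - metricProj C x⟫ ≤ 0 := by
  letI : Nonempty C := hne.to_subtype
  have hbdd : BddBelow (Set.range fun w : C => ‖x - w‖) :=
    ⟨0, by rintro y ⟨w, rfl⟩; exact norm_nonneg _⟩
  have hex : ∃ y, y ∈ C ∧ ∀ z ∈ C, ‖x - y‖ ≤ ‖x - z‖ := by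
    obtain ⟨v, hv, hmin⟩ := exists_norm_eq_iInf_of_complete_convex hne hcl.isComplete hcv x
    exact ⟨v, hv, fun z hz => hmin ▸ ciInf_le hbdd ⟨z, hz⟩⟩
  have hmem := hex.choose_spec.1
  have hmin := hex.choose_spec.2
  rw [metricProj, dif_pos hex]
  refine ⟨hmem, ?_⟩
  have heq : ‖x - hex.choose‖ = ⨅ w : C, ‖x - w‖ :=
    le_antisymm (le_ciInf fun w => hmin w w.2) (ciInf_le hbdd ⟨_, hmem⟩)
  exact (norm_eq_iInf_iff_real_inner_le_zero hcv hmem).mp heq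

lemma metricProj_eq {d : ℕ} {C : Set (EuclideanSpace ℝ (Fin d))} (hne : C.Nonempty)
    (hcl : IsClosed C) (hcv : Convex ℝ C) {x q : EuclideanSpace ℝ (Fin d)} (hq : q ∈ C)
    (hchar : ∀ z ∈ C, ⟪x - q, z - q⟫ ≤ 0) : metricProj C x = q := by
  obtain ⟨hmem, hP⟩ := metricProj_spec hne hcl hcv x
  set p := metricProj C x
  have h1 : ⟪x - p, q - p⟫ ≤ 0 := hP q hq
  have h2 : ⟪x - q, p - q⟫ ≤ 0 := hchar p hmem
  have key : ⟪p - q, p - q⟫ ≤ 0 := by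
    have e : ⟪p - q, p - q⟫ = ⟪x - q, p - q⟫ + ⟪x - p, q - p⟫ := by
      have h3 : (p : EuclideanSpace ℝ (Fin d)) - q = (x - q) - (x - p) := by abel
      rw [h3, inner_sub_left]
      have h4 : q - p = -((x-q) - (x-p)) := by abel
      rw [h4, inner_neg_right]
      ring
    linarith [e ▸ add_nonpos h2 h1]
  have hz : p - q = 0 := by
    have hnn := real_inner_self_nonneg (x := p - q)
    exact inner_self_eq_zero.mp (le_antisymm key hnn)
  exact sub_eq_zero.mp hz

lemma proj_nonexp_aux {d : ℕ} {x y p q : EuclideanSpace ℝ (Fin d)}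
    (h1 : ⟪x - p, q - p⟫ ≤ 0) (h2 : ⟪y - q, p - q⟫ ≤ 0) : ‖p - q‖ ≤ ‖x - y‖ := by
  have key : ‖p - q‖ ^ 2 ≤ ⟪x - y, p - q⟫ := by
    have e : ⟪x - y, p - q⟫ - ‖p - q‖ ^ 2 = (-⟪x - p, q - p⟫) + (-⟪y - q, p - q⟫) := by
      have e1 : ⟪x - p, q - p⟫ = -⟪x - p, p - q⟫ := by
        rw [show q - p = -(p - q) by abel, inner_neg_right]
      have e2 : ‖p - q‖ ^ 2 = ⟪p - q, p - q⟫ := (real_inner_self_eq_norm_sq _).symm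
      rw [e1, e2, show x - y = (x - p) - (y - q) + (p - q) by abel, inner_add_left,
        inner_sub_left]
      ring
    nlinarith [e]
  have h3 : ⟪x - y, p - q⟫ ≤ ‖x - y‖ * ‖p - q‖ := real_inner_le_norm _ _
  rcases (norm_nonneg (p - q)).eq_or_lt with h | h
  · rw [← h]; exact norm_nonneg _
  · have h4 : ‖p - q‖ * ‖p - q‖ ≤ ‖x - y‖ * ‖p - q‖ := by nlinarith
    exact le_of_mul_le_mul_right h4 h

lemma norm_smul_add_smul_sq {d : ℕ} (c t : ℝ) (u v : EuclideanSpace ℝ (Fin d)) :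
    ‖c • u + t • v‖ ^ 2 = c^2 * ‖u‖^2 + 2 * (c * t) * ⟪u, v⟫ + t^2 * ‖v‖^2 := by
  rw [norm_add_sq_real, real_inner_smul_left, real_inner_smul_right, norm_smul, norm_smul,
    mul_pow, mul_pow]
  simp [Real.norm_eq_abs, sq_abs]
  ring

lemma quad_nonpos (a b c D F : ℝ) (ha : a < 0) (hd : b^2 ≤ 4*(a*c)) :
    a*D^2 + b*(D*F) + c*F^2 ≤ 0 := by
  nlinarith [sq_nonneg (2*a*D + b*F), mul_nonneg (sub_nonneg.2 hd) (sq_nonneg F), sq_nonneg F,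
    sq_nonneg D]

set_option maxHeartbeats 2000000 in
/-- Under the assumptions of the linear-convergence theorem, the iterates of
the inertial projection algorithm satisfy, for every `n ≥ 1`,
`v^{Δ∇}(n) + σ v^∇(n) + θτ v_n + C₀ c_n + C₁ c^Δ(n) ≤ 0`,
where `v_n = ‖x_n − x*‖²`, `c_n = ‖x_n − x_{n−1}‖²`, `C₀ = σ(θ₁σ/τ + 1) − 4` and
`C₁ = θ₁σ/τ + 1`. -/
theorem stmt_17 {d : ℕ} (ψ : EuclideanSpace ℝ (Fin d) → Set (EuclideanSpace ℝ (Fin d)))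
    (V : EuclideanSpace ℝ (Fin d) → EuclideanSpace ℝ (Fin d)) (L η μ ρ θ θ₁ σ τ C₀ C₁ : ℝ)
    (hΓ₁ : ∀ x, (ψ x).Nonempty ∧ IsClosed (ψ x) ∧ Convex ℝ (ψ x))
    (hL : ∀ y z, ‖V y - V z‖ ≤ L * ‖y - z‖)
    (hη : ∀ y z, η * ‖y - z‖ ^ 2 ≤ ⟪V y - V z, y - z⟫)
    (hμ : 0 < μ) (hρ : 0 < ρ)
    (hproj : ∀ y r s, ‖metricProj (ψ r) y - metricProj (ψ s) y‖ ≤ ρ * ‖r - s‖)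
    (hθ : θ = η - ρ - 1/2 - L^2/2 - μ^2/2 + μ*η) (hθpos : 0 < θ)
    (hcond : Real.sqrt (L^2 - 2*η*μ + μ^2) + ρ < μ)
    (hθ₁ : θ₁ = θ / (2*L + ρ + μ)^2)
    (hσ0 : 0 < σ) (hσ1 : σ < 1)
    (hτ0 : 0 < τ) (hτ : τ < θ₁ * min ((1 - σ)/4) (σ^2/(4 - σ)))
    (hC₀ : C₀ = σ * (θ₁ * σ / τ + 1) - 4) (hC₁ : C₁ = θ₁ * σ / τ + 1)
    (xs : EuclideanSpace ℝ (Fin d))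
    (hxs : V xs ∈ ψ xs ∧ ∀ z ∈ ψ xs, 0 ≤ ⟪xs, z - V xs⟫)
    (x : ℕ → EuclideanSpace ℝ (Fin d))
    (hiter : ∀ n : ℕ, 1 ≤ n →
      x (n+1) = x n + (1 - σ) • (x n - x (n-1)) +
        τ • (metricProj (ψ (x n)) (V (x n) - μ • x n) - V (x n))) :
    ∀ n : ℕ, 1 ≤ n →
      ((‖x (n+1) - xs‖ ^ 2 - ‖x n - xs‖ ^ 2) - (‖x n - xs‖ ^ 2 - ‖x (n-1) - xs‖ ^ 2))
          + σ * (‖x n - xs‖ ^ 2 - ‖x (n-1) - xs‖ ^ 2)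
          + θ * τ * ‖x n - xs‖ ^ 2
          + C₀ * ‖x n - x (n-1)‖ ^ 2
          + C₁ * (‖x (n+1) - x n‖ ^ 2 - ‖x n - x (n-1)‖ ^ 2) ≤ 0 := by
  subst hC₀; subst hC₁
  obtain ⟨hxsmem, hxsvi⟩ := hxs
  -- basic positivity facts
  have hmin : 0 < min ((1 - σ)/4) (σ^2/(4 - σ)) := by
    apply lt_min
    · linarith
    · exact div_pos (by positivity) (by linarith)
  have hθ₁pos : 0 < θ₁ := by
    by_contra h
    push_neg at h
    have : θ₁ * min ((1 - σ)/4) (σ^2/(4 - σ)) ≤ 0 :=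
      mul_nonpos_of_nonpos_of_nonneg h hmin.le
    linarith
  have hτne : τ ≠ 0 := ne_of_gt hτ0
  have hS2 : (2*L + ρ + μ)^2 ≠ 0 := by
    intro h0
    have : θ₁ = 0 := by rw [hθ₁, h0, div_zero]
    exact hθ₁pos.ne' this
  have hθ₁S : θ₁ * (2*L + ρ + μ)^2 = θ := by
    rw [hθ₁]; exact div_mul_cancel₀ θ hS2
  -- fixed point property of the solution
  have hψs := hΓ₁ xs
  have hfix : metricProj (ψ xs) (V xs - μ • xs) = V xs := by
    apply metricProj_eq hψs.1 hψs.2.1 hψs.2.2 hxsmem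
    intro z hz
    have e : (V xs - μ • xs) - V xs = -(μ • xs) := by abel
    rw [e, inner_neg_left, real_inner_smul_left]
    have := hxsvi z hz
    nlinarith
  -- K
  set K := θ₁ * σ / τ with hKdef
  have hKτ : K * τ = θ₁ * σ := by rw [hKdef]; field_simp
  have hKpos : 0 < K := by rw [hKdef]; positivity
  have hτ4 : 4 * τ < θ₁ * (1 - σ) := by
    have h := lt_of_lt_of_le hτ (mul_le_mul_of_nonneg_left (min_le_left _ _) hθ₁pos.le)
    linarith
  have hK4 : 4 * σ < K * (1 - σ) := by
    have h1 : 4*σ*τ < K*(1-σ)*τ := by nlinarith [hKτ]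
    exact lt_of_mul_lt_mul_right h1 hτ0.le
  intro n hn
  -- names for the relevant vectors
  obtain ⟨F, hFdef⟩ : ∃ F, F = metricProj (ψ (x n)) (V (x n) - μ • x n) - V (x n) := ⟨_, rfl⟩
  obtain ⟨p, hpdef⟩ : ∃ p, p = metricProj (ψ (x n)) (V (x n) - μ • x n) := ⟨_, rfl⟩
  obtain ⟨p', hp'def⟩ : ∃ p', p' = metricProj (ψ (x n)) (V xs - μ • xs) := ⟨_, rfl⟩
  have hψn := hΓ₁ (x n)
  have hspec1 := metricProj_spec hψn.1 hψn.2.1 hψn.2.2 (V (x n) - μ • x n)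
  have hspec2 := metricProj_spec hψn.1 hψn.2.1 hψn.2.2 (V xs - μ • xs)
  rw [← hpdef] at hspec1
  rw [← hp'def] at hspec2
  have hpp' : ‖p - p'‖ ≤ ‖(V (x n) - μ • x n) - (V xs - μ • xs)‖ :=
    proj_nonexp_aux (hspec1.2 p' hspec2.1) (hspec2.2 p hspec1.1)
  have hp'star : ‖p' - V xs‖ ≤ ρ * ‖x n - xs‖ := by
    have h := hproj (V xs - μ • xs) (x n) xs
    rwa [hfix, ← hp'def] at h
  have hw : (V (x n) - μ • x n) - (V xs - μ • xs) = (V (x n) - V xs) - μ • (x n - xs) := by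
    rw [smul_sub]; abel
  have hwsq : ‖(V (x n) - V xs) - μ • (x n - xs)‖^2 ≤ (L^2 - 2*η*μ + μ^2) * ‖x n - xs‖^2 := by
    rw [norm_sub_sq_real, real_inner_smul_right, norm_smul, mul_pow, Real.norm_eq_abs, sq_abs]
    have h1 : ‖V (x n) - V xs‖^2 ≤ L^2 * ‖x n - xs‖^2 := by
      have h := hL (x n) xs
      nlinarith [norm_nonneg (V (x n) - V xs), norm_nonneg (x n - xs)]
    have h2 := hη (x n) xs
    linarith [h1, mul_le_mul_of_nonneg_left h2 hμ.le]
  have hFp : F = p - V (x n) := by rw [hFdef, hpdef]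
  have hFsplit : F = (p - p') + (p' - V xs) - (V (x n) - V xs) := by rw [hFp]; abel
  -- Claim A
  have claimA : ⟪x n - xs, F⟫ ≤ -θ * ‖x n - xs‖^2 := by
    have e : ⟪x n - xs, F⟫ =
        ⟪p - p', x n - xs⟫ + ⟪p' - V xs, x n - xs⟫ - ⟪V (x n) - V xs, x n - xs⟫ := by
      rw [real_inner_comm, hFsplit, inner_sub_left, inner_add_left]
    have i2 : ‖p - p'‖ ≤ ‖(V (x n) - V xs) - μ • (x n - xs)‖ := by rwa [hw] at hpp'
    have b1 : ⟪p - p', x n - xs⟫ ≤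
        (‖(V (x n) - V xs) - μ • (x n - xs)‖^2 + ‖x n - xs‖^2)/2 := by
      have i1 := real_inner_le_norm (p - p') (x n - xs)
      nlinarith [norm_nonneg (x n - xs), norm_nonneg (p - p'),
        sq_nonneg (‖(V (x n) - V xs) - μ • (x n - xs)‖ - ‖x n - xs‖),
        mul_le_mul_of_nonneg_right i2 (norm_nonneg (x n - xs))]
    have b2 : ⟪p' - V xs, x n - xs⟫ ≤ ρ * ‖x n - xs‖^2 := by
      have i1 := real_inner_le_norm (p' - V xs) (x n - xs)
      nlinarith [mul_le_mul_of_nonneg_right hp'star (norm_nonneg (x n - xs))]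
    have b3 : η * ‖x n - xs‖^2 ≤ ⟪V (x n) - V xs, x n - xs⟫ := hη (x n) xs
    rw [hθ]
    nlinarith [e, b1, b2, b3, hwsq]
  -- Claim B
  have claimB : ‖F‖ ≤ (2*L + ρ + μ) * ‖x n - xs‖ := by
    have t1 : ‖F‖ ≤ ‖p - p'‖ + ‖p' - V xs‖ + ‖V (x n) - V xs‖ := by
      rw [hFsplit]
      refine le_trans (norm_sub_le _ _) ?_
      have := norm_add_le (p - p') (p' - V xs)
      linarith
    have i2 : ‖p - p'‖ ≤ ‖(V (x n) - V xs) - μ • (x n - xs)‖ := by rwa [hw] at hpp'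
    have t2 : ‖(V (x n) - V xs) - μ • (x n - xs)‖ ≤ L * ‖x n - xs‖ + μ * ‖x n - xs‖ := by
      refine le_trans (norm_sub_le _ _) ?_
      have e : ‖μ • (x n - xs)‖ = μ * ‖x n - xs‖ := by
        rw [norm_smul, Real.norm_eq_abs, abs_of_pos hμ]
      linarith [hL (x n) xs]
    linarith [hL (x n) xs]
  have claimB2 : θ₁ * ‖F‖^2 ≤ θ * ‖x n - xs‖^2 := by
    have h1 : ‖F‖^2 ≤ (2*L+ρ+μ)^2 * ‖x n - xs‖^2 := by
      nlinarith [norm_nonneg F, claimB]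
    calc θ₁ * ‖F‖^2 ≤ θ₁ * ((2*L+ρ+μ)^2 * ‖x n - xs‖^2) :=
          mul_le_mul_of_nonneg_left h1 hθ₁pos.le
      _ = θ * ‖x n - xs‖^2 := by rw [← hθ₁S]; ring
  -- quadratic form
  have hQA : σ*((K+2)*(1-σ)^2 - (1-σ)*K - 4) < 0 := by
    nlinarith [mul_pos (mul_pos hσ0 hKpos) (mul_pos hσ0 (by linarith : (0:ℝ) < 1 - σ)),
      sq_nonneg (1-σ)]
  have hid : 4*((σ*((K+2)*(1-σ)^2 - (1-σ)*K - 4))*(σ*(K+2)*τ^2 - K*τ^2))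
      - (2*σ*(K+2)*(1-σ)*τ)^2 = 8*τ^2*σ*(K*(1-σ) - 4*σ) := by ring
  have hdisc : (2*σ*(K+2)*(1-σ)*τ)^2 ≤
      4*((σ*((K+2)*(1-σ)^2 - (1-σ)*K - 4))*(σ*(K+2)*τ^2 - K*τ^2)) := by
    linarith [hid, mul_pos (mul_pos (mul_pos (by norm_num : (0:ℝ) < 8) (pow_pos hτ0 2)) hσ0)
      (by linarith : (0:ℝ) < K*(1-σ) - 4*σ)]
  have hquad := quad_nonpos (σ*((K+2)*(1-σ)^2 - (1-σ)*K - 4)) (2*σ*(K+2)*(1-σ)*τ)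
    (σ*(K+2)*τ^2 - K*τ^2) ‖x n - x (n-1)‖ ‖F‖ hQA hdisc
  -- geometric identities
  have hd1 : x (n+1) - x n = (1-σ) • (x n - x (n-1)) + τ • F := by
    rw [hiter n hn, ← hFdef]; abel
  have ha1 : x (n+1) - xs = (x n - xs) + ((1-σ) • (x n - x (n-1)) + τ • F) := by
    rw [hiter n hn, ← hFdef]; abel
  have hbm : x (n-1) - xs = (x n - xs) - (x n - x (n-1)) := by abel
  have e1 : ‖x (n-1) - xs‖^2 =
      ‖x n - xs‖^2 - 2*⟪x n - xs, x n - x (n-1)⟫ + ‖x n - x (n-1)‖^2 := by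
    rw [hbm, norm_sub_sq_real]
  have e2 : ‖x (n+1) - x n‖^2 = (1-σ)^2*‖x n - x (n-1)‖^2
      + 2*((1-σ)*τ)*⟪x n - x (n-1), F⟫ + τ^2*‖F‖^2 := by
    rw [hd1, norm_smul_add_smul_sq]
  have e3 : ‖x (n+1) - xs‖^2 = ‖x n - xs‖^2
      + 2*((1-σ)*⟪x n - xs, x n - x (n-1)⟫ + τ*⟪x n - xs, F⟫)
      + ((1-σ)^2*‖x n - x (n-1)‖^2 + 2*((1-σ)*τ)*⟪x n - x (n-1), F⟫ + τ^2*‖F‖^2) := by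
    rw [ha1, norm_add_sq_real, inner_add_right, real_inner_smul_right, real_inner_smul_right,
      norm_smul_add_smul_sq]
  have hr : ⟪x n - x (n-1), F⟫ ≤ ‖x n - x (n-1)‖ * ‖F‖ := real_inner_le_norm _ _
  rw [e1, e2, e3]
  by_contra hcon
  push_neg at hcon
  have h1 : σ*τ*(⟪x n - xs, F⟫ + θ*‖x n - xs‖^2) ≤ 0 :=
    mul_nonpos_of_nonneg_of_nonpos (mul_nonneg hσ0.le hτ0.le) (by linarith [claimA])
  have h2 : τ*(K*τ*‖F‖^2 - σ*(θ*‖x n - xs‖^2)) ≤ 0 := by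
    have hle : K*τ*‖F‖^2 ≤ σ*(θ*‖x n - xs‖^2) := by
      have h := mul_le_mul_of_nonneg_left claimB2 hσ0.le
      have e : K*τ*‖F‖^2 = σ*(θ₁*‖F‖^2) := by rw [hKτ]; ring
      linarith [h, e]
    exact mul_nonpos_of_nonneg_of_nonpos hτ0.le (by linarith)
  have h3 : (2*σ*(K+2)*(1-σ)*τ)*(⟪x n - x (n-1), F⟫ - ‖x n - x (n-1)‖*‖F‖) ≤ 0 := by
    apply mul_nonpos_of_nonneg_of_nonpos
    · exact mul_nonneg (mul_nonneg (mul_nonneg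
        (by linarith : (0:ℝ) ≤ 2*σ) (by linarith : (0:ℝ) ≤ K+2))
        (by linarith : (0:ℝ) ≤ 1-σ)) hτ0.le
    · linarith [hr]
  have hfinal := mul_pos hσ0 hcon
  linarith [hquad, h1, h2, h3, hfinal]
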